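/- arXiv:2008.08577 — 6 statements merged into one kernel-verified Lean document; each statement's English description precedes it below -/
import Mathlib

section
/- Let F be a real inner product space and let r ≥ 1 be a real number. Then for all x, y ∈ F one has ⟨‖x‖^{r−1}·x − ‖y‖^{r−1}·y, x − y⟩ ≥ (‖x‖^r − ‖y‖^r)(‖x‖ − ‖y‖) ≥ 0; in particular the Forchheimer nonlinearity is a monotone map. -/
open Real

theorem forchheimer_monotone {F : Type*} [NormedAddCommGroup F] [InnerProductSpace ℝ F]
    (r : ℝ) (hr : 1 ≤ r) (x y : F) :
    (inner ℝ (‖x‖ ^ (r - 1) • x - ‖y‖ ^ (r - 1) • y) (x - y) : ℝ) ≥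
        (‖x‖ ^ r - ‖y‖ ^ r) * (‖x‖ - ‖y‖) ∧
      (‖x‖ ^ r - ‖y‖ ^ r) * (‖x‖ - ‖y‖) ≥ 0 := by
  have key : ∀ t : ℝ, 0 ≤ t → t ^ (r - 1) * t = t ^ r := by
    intro t ht
    rcases eq_or_lt_of_le ht with h | h
    · rw [← h, Real.zero_rpow (by linarith : r ≠ 0)]
      ring
    · nth_rewrite 2 [← Real.rpow_one t]
      rw [← Real.rpow_add h]
      norm_num
  have hx := key ‖x‖ (norm_nonneg x)
  have hy := key ‖y‖ (norm_nonneg y)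
  have ha : (0:ℝ) ≤ ‖x‖ ^ (r - 1) := Real.rpow_nonneg (norm_nonneg x) _
  have hb : (0:ℝ) ≤ ‖y‖ ^ (r - 1) := Real.rpow_nonneg (norm_nonneg y) _
  have hsecond : (‖x‖ ^ r - ‖y‖ ^ r) * (‖x‖ - ‖y‖) ≥ 0 := by
    rcases le_total ‖x‖ ‖y‖ with h | h
    · have := Real.rpow_le_rpow (norm_nonneg x) h (by linarith : 0 ≤ r)
      nlinarith
    · have := Real.rpow_le_rpow (norm_nonneg y) h (by linarith : 0 ≤ r)
      nlinarith
  refine ⟨?_, hsecond⟩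
  have hexp : (inner ℝ (‖x‖ ^ (r - 1) • x - ‖y‖ ^ (r - 1) • y) (x - y) : ℝ) =
      ‖x‖ ^ (r - 1) * (‖x‖ * ‖x‖) + ‖y‖ ^ (r - 1) * (‖y‖ * ‖y‖)
        - (‖x‖ ^ (r - 1) + ‖y‖ ^ (r - 1)) * inner ℝ x y := by
    rw [inner_sub_left, inner_sub_right, inner_sub_right,
      real_inner_smul_left, real_inner_smul_left, real_inner_smul_left,
      real_inner_smul_left, real_inner_self_eq_norm_mul_norm,
      real_inner_self_eq_norm_mul_norm, real_inner_comm y x]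
    ring
  rw [hexp]
  have hcs := real_inner_le_norm x y
  have h1 : ‖x‖ ^ (r - 1) * (‖x‖ * ‖x‖) = ‖x‖ ^ r * ‖x‖ := by rw [← hx]; ring
  have h2 : ‖y‖ ^ (r - 1) * (‖y‖ * ‖y‖) = ‖y‖ ^ r * ‖y‖ := by rw [← hy]; ring
  have h3 : ‖x‖ ^ (r - 1) * ‖x‖ * ‖y‖ = ‖x‖ ^ r * ‖y‖ := by rw [← hx]
  have h4 : ‖y‖ ^ (r - 1) * ‖y‖ * ‖x‖ = ‖y‖ ^ r * ‖x‖ := by rw [← hy]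
  nlinarith [mul_nonneg ha (sub_nonneg.2 hcs), mul_nonneg hb (sub_nonneg.2 hcs)]
end

section
/- Let F be a real inner product space and let r ≥ 1 be a real number. Then for all x, y ∈ F one has ⟨‖x‖^{r−1}·x − ‖y‖^{r−1}·y, x − y⟩ ≥ (1/2)‖x‖^{r−1}‖x − y‖² + (1/2)‖y‖^{r−1}‖x − y‖². -/
open Real

theorem forchheimer_strong_monotone {F : Type*} [NormedAddCommGroup F] [InnerProductSpace ℝ F]
    (r : ℝ) (hr : 1 ≤ r) (x y : F) :
    (inner ℝ (‖x‖ ^ (r - 1) • x - ‖y‖ ^ (r - 1) • y) (x - y) : ℝ) ≥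
      (1 / 2) * ‖x‖ ^ (r - 1) * ‖x - y‖ ^ 2 + (1 / 2) * ‖y‖ ^ (r - 1) * ‖x - y‖ ^ 2 := by
  set a := ‖x‖ ^ (r - 1) with ha
  set b := ‖y‖ ^ (r - 1) with hb
  have ha0 : 0 ≤ a := Real.rpow_nonneg (norm_nonneg x) _
  have hb0 : 0 ≤ b := Real.rpow_nonneg (norm_nonneg y) _
  have hmono : 0 ≤ (a - b) * (‖x‖ ^ 2 - ‖y‖ ^ 2) := by
    rcases le_total ‖x‖ ‖y‖ with h | h
    · have h1 : a ≤ b := Real.rpow_le_rpow (norm_nonneg x) h (by linarith)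
      have h2 : ‖x‖ ^ 2 ≤ ‖y‖ ^ 2 := by
        exact pow_le_pow_left₀ (norm_nonneg x) h 2
      nlinarith
    · have h1 : b ≤ a := Real.rpow_le_rpow (norm_nonneg y) h (by linarith)
      have h2 : ‖y‖ ^ 2 ≤ ‖x‖ ^ 2 := by
        exact pow_le_pow_left₀ (norm_nonneg y) h 2
      nlinarith
  have hinner : (inner ℝ (a • x - b • y) (x - y) : ℝ) =
      a * ‖x‖ ^ 2 - (a + b) * inner ℝ x y + b * ‖y‖ ^ 2 := by
    simp only [inner_sub_left, inner_sub_right, real_inner_smul_left,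
      real_inner_self_eq_norm_sq, real_inner_comm y x]
    ring
  have hns : ‖x - y‖ ^ 2 = ‖x‖ ^ 2 - 2 * inner ℝ x y + ‖y‖ ^ 2 := norm_sub_sq_real x y
  rw [hinner]
  nlinarith [hns, hmono]
end

section
/- Let F be a real inner product space and let r ≥ 1 be a real number. Then for all x, y ∈ F one has ‖ ‖x‖^{r−1}·x − ‖y‖^{r−1}·y ‖ ≤ r·(‖x‖ + ‖y‖)^{r−1}·‖x − y‖. -/
open Real

/-- Young-type scalar inequality: for `0 ≤ b ≤ a` and `1 ≤ r`,
`(a^(r-1) - b^(r-1)) * b ≤ (r-1) * a^(r-1) * (a - b)`. -/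
lemma forchheimer_scalar_key (r a b : ℝ) (hr : 1 ≤ r) (hb : 0 ≤ b) (hba : b ≤ a) :
    (a ^ (r - 1) - b ^ (r - 1)) * b ≤ (r - 1) * a ^ (r - 1) * (a - b) := by
  have ha : 0 ≤ a := hb.trans hba
  rcases eq_or_lt_of_le hb with hb0 | hb0
  · rw [← hb0]
    have : 0 ≤ (r - 1) * a ^ (r - 1) * (a - 0) := by
      apply mul_nonneg (mul_nonneg (by linarith) (Real.rpow_nonneg ha _)) (by linarith)
    simpa using this
  rcases eq_or_lt_of_le hr with hr1 | hr1
  · rw [← hr1]; norm_num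
  have ha0 : 0 < a := lt_of_lt_of_le hb0 hba
  have hrpos : (0:ℝ) < r := by linarith
  have hrne : r ≠ 0 := ne_of_gt hrpos
  -- weighted AM-GM: (a^r)^((r-1)/r) * (b^r)^(1/r) ≤ (r-1)/r * a^r + 1/r * b^r
  have hgm := Real.geom_mean_le_arith_mean2_weighted
    (w₁ := (r-1)/r) (w₂ := 1/r) (p₁ := a ^ r) (p₂ := b ^ r)
    (div_nonneg (by linarith) hrpos.le) (by positivity) (Real.rpow_nonneg ha _) (Real.rpow_nonneg hb _)
    (by field_simp; ring)
  have e1 : (a ^ r) ^ ((r-1)/r) = a ^ (r - 1) := by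
    rw [← Real.rpow_mul ha, mul_div_cancel₀ _ hrne]
  have e2 : (b ^ r) ^ ((1:ℝ)/r) = b := by
    rw [← Real.rpow_mul hb, mul_one_div, div_self hrne, Real.rpow_one]
  rw [e1, e2] at hgm
  have hyoung : r * (a ^ (r - 1) * b) ≤ (r - 1) * a ^ r + b ^ r := by
    have := mul_le_mul_of_nonneg_left hgm (le_of_lt hrpos)
    calc r * (a ^ (r - 1) * b) ≤ r * ((r-1)/r * a ^ r + 1/r * b ^ r) := this
      _ = (r - 1) * a ^ r + b ^ r := by field_simp
  have ea : a ^ (r - 1) * a = a ^ r := by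
    rw [← Real.rpow_add_one (ne_of_gt ha0)]; ring_nf
  have eb : b ^ (r - 1) * b = b ^ r := by
    rw [← Real.rpow_add_one (ne_of_gt hb0)]; ring_nf
  nlinarith [hyoung, ea, eb]

theorem forchheimer_local_lipschitz {F : Type*} [NormedAddCommGroup F] [InnerProductSpace ℝ F]
    (r : ℝ) (hr : 1 ≤ r) (x y : F) :
    ‖‖x‖ ^ (r - 1) • x - ‖y‖ ^ (r - 1) • y‖ ≤ r * (‖x‖ + ‖y‖) ^ (r - 1) * ‖x - y‖ := by
  wlog hba : ‖y‖ ≤ ‖x‖ generalizing x y with H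
  · have h := H y x (le_of_not_ge hba)
    rw [norm_sub_rev (‖y‖ ^ (r - 1) • y) (‖x‖ ^ (r - 1) • x), norm_sub_rev y x, add_comm ‖y‖ ‖x‖] at h
    exact h
  have hr' : 0 ≤ r - 1 := by linarith
  have hax : 0 ≤ ‖x‖ := norm_nonneg x
  have hay : 0 ≤ ‖y‖ := norm_nonneg y
  have hpow : ‖y‖ ^ (r - 1) ≤ ‖x‖ ^ (r - 1) := Real.rpow_le_rpow hay hba hr'
  have key : ‖x‖ ^ (r - 1) • x - ‖y‖ ^ (r - 1) • y
      = ‖x‖ ^ (r - 1) • (x - y) + (‖x‖ ^ (r - 1) - ‖y‖ ^ (r - 1)) • y := by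
    rw [smul_sub, sub_smul]; abel
  have step1 : ‖‖x‖ ^ (r - 1) • x - ‖y‖ ^ (r - 1) • y‖
      ≤ ‖x‖ ^ (r - 1) * ‖x - y‖ + (‖x‖ ^ (r - 1) - ‖y‖ ^ (r - 1)) * ‖y‖ := by
    rw [key]
    refine (norm_add_le _ _).trans ?_
    rw [norm_smul, norm_smul, Real.norm_eq_abs, Real.norm_eq_abs,
      abs_of_nonneg (Real.rpow_nonneg hax _), abs_of_nonneg (by linarith)]
  have step2 : (‖x‖ ^ (r - 1) - ‖y‖ ^ (r - 1)) * ‖y‖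
      ≤ (r - 1) * ‖x‖ ^ (r - 1) * ‖x - y‖ := by
    refine (forchheimer_scalar_key r ‖x‖ ‖y‖ hr hay hba).trans ?_
    have h1 : ‖x‖ - ‖y‖ ≤ ‖x - y‖ := norm_sub_norm_le x y
    have h2 : 0 ≤ (r - 1) * ‖x‖ ^ (r - 1) := mul_nonneg hr' (Real.rpow_nonneg hax _)
    exact mul_le_mul_of_nonneg_left h1 h2
  have step3 : ‖x‖ ^ (r - 1) ≤ (‖x‖ + ‖y‖) ^ (r - 1) :=
    Real.rpow_le_rpow hax (by linarith) hr'
  have hd : 0 ≤ ‖x - y‖ := norm_nonneg _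
  calc ‖‖x‖ ^ (r - 1) • x - ‖y‖ ^ (r - 1) • y‖
      ≤ ‖x‖ ^ (r - 1) * ‖x - y‖ + (r - 1) * ‖x‖ ^ (r - 1) * ‖x - y‖ := by linarith
    _ = r * ‖x‖ ^ (r - 1) * ‖x - y‖ := by ring
    _ ≤ r * (‖x‖ + ‖y‖) ^ (r - 1) * ‖x - y‖ := by
        apply mul_le_mul_of_nonneg_right _ hd
        exact mul_le_mul_of_nonneg_left step3 (by linarith)
end

section
/- Let (X, m) be a measure space, n ≥ 1, and let r ≥ 1 be a real number. If f, g ∈ L^{r+1}(m; ℝ^n), then the function x ↦ |f(x)|^{r−1}f(x) − |g(x)|^{r−1}g(x) belongs to L^{(r+1)/r}(m; ℝ^n) and ‖ |f|^{r−1}f − |g|^{r−1}g ‖_{L^{(r+1)/r}} ≤ r·(‖f‖_{L^{r+1}} + ‖g‖_{L^{r+1}})^{r−1}·‖f − g‖_{L^{r+1}}. In particular the map u ↦ |u|^{r−1}u from L^{r+1}(m; ℝ^n) to L^{(r+1)/r}(m; ℝ^n) is locally Lipschitz. -/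
open Real MeasureTheory ENNReal

private lemma scalar_key {q s t : ℝ} (hq : 0 ≤ q) (ht : 0 ≤ t) (hts : t ≤ s) :
    (s ^ q - t ^ q) * t ≤ q * s ^ q * (s - t) := by
  have hs : 0 ≤ s := ht.trans hts
  have hAB : t ^ q ≤ s ^ q := Real.rpow_le_rpow ht hts hq
  rcases eq_or_lt_of_le ht with h0 | ht0
  · rw [← h0]
    have h : 0 ≤ q * s ^ q * s := by positivity
    simpa using h
  have hs0 : 0 < s := lt_of_lt_of_le ht0 hts
  rcases le_or_gt 1 q with h1 | h1
  · -- q ≥ 1 : Bernoulli at s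
    have hx : -1 ≤ t / s - 1 := by
      have : 0 ≤ t / s := div_nonneg ht hs
      linarith
    have hber := one_add_mul_self_le_rpow_one_add hx h1
    have hts' : 1 + (t / s - 1) = t / s := by ring
    rw [hts', Real.div_rpow ht hs] at hber
    have hA : 0 < s ^ q := Real.rpow_pos_of_pos hs0 q
    have e1 : (1 + q * (t / s - 1)) * s ^ q ≤ t ^ q := (le_div_iff₀ hA).mp hber
    have hu : t / s * s = t := div_mul_cancel₀ t hs0.ne'
    have e2 : (1 + q * (t / s - 1)) * s ^ q * s
        = s ^ q * s + q * (t / s * s) * s ^ q - q * s * s ^ q := by ring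
    have e3 : s ^ q * s + q * t * s ^ q - q * s * s ^ q ≤ t ^ q * s := by
      have h := mul_le_mul_of_nonneg_right e1 hs0.le
      rw [e2, hu] at h
      exact h
    have h2 : (s ^ q - t ^ q) * s ≤ q * s ^ q * (s - t) := by nlinarith [e3]
    calc (s ^ q - t ^ q) * t ≤ (s ^ q - t ^ q) * s :=
          mul_le_mul_of_nonneg_left hts (by linarith)
      _ ≤ q * s ^ q * (s - t) := h2
  · -- q ≤ 1 : reverse Bernoulli at t
    have hx : -1 ≤ s / t - 1 := by
      have : 0 ≤ s / t := div_nonneg hs ht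
      linarith
    have hber := rpow_one_add_le_one_add_mul_self hx hq h1.le
    have hst' : 1 + (s / t - 1) = s / t := by ring
    rw [hst', Real.div_rpow hs ht] at hber
    have hB : 0 < t ^ q := Real.rpow_pos_of_pos ht0 q
    have e1 : s ^ q ≤ (1 + q * (s / t - 1)) * t ^ q := by
      rw [div_le_iff₀ hB] at hber
      linarith
    have hu : s / t * t = s := div_mul_cancel₀ s ht0.ne'
    have e2 : (1 + q * (s / t - 1)) * t ^ q * t
        = t ^ q * t + q * (s / t * t) * t ^ q - q * t * t ^ q := by ring
    have e3 : s ^ q * t ≤ t ^ q * t + q * s * t ^ q - q * t * t ^ q := by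
      have h := mul_le_mul_of_nonneg_right e1 ht0.le
      rw [e2, hu] at h
      exact h
    have h2 : (s ^ q - t ^ q) * t ≤ q * t ^ q * (s - t) := by nlinarith [e3]
    calc (s ^ q - t ^ q) * t ≤ q * t ^ q * (s - t) := h2
      _ ≤ q * s ^ q * (s - t) := by
        nlinarith [mul_nonneg (mul_nonneg hq (sub_nonneg.mpr hAB)) (sub_nonneg.mpr hts)]

private lemma vector_key_aux {E : Type*} [NormedAddCommGroup E] [NormedSpace ℝ E]
    {r : ℝ} (hr : 1 ≤ r) (a b : E) (hab : ‖b‖ ≤ ‖a‖) :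
    ‖‖a‖ ^ (r - 1) • a - ‖b‖ ^ (r - 1) • b‖ ≤ r * (‖a‖ + ‖b‖) ^ (r - 1) * ‖a - b‖ := by
  set q := r - 1 with hqdef
  have hq : 0 ≤ q := by rw [hqdef]; linarith
  have hA : (0:ℝ) ≤ ‖a‖ ^ q := Real.rpow_nonneg (norm_nonneg a) q
  have hBA : ‖b‖ ^ q ≤ ‖a‖ ^ q := Real.rpow_le_rpow (norm_nonneg b) hab hq
  have h1 : ‖a‖ ^ q • a - ‖b‖ ^ q • b = ‖a‖ ^ q • (a - b) + (‖a‖ ^ q - ‖b‖ ^ q) • b := by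
    rw [smul_sub, sub_smul]; abel
  have h2 : ‖‖a‖ ^ q • a - ‖b‖ ^ q • b‖ ≤ ‖a‖ ^ q * ‖a - b‖ + (‖a‖ ^ q - ‖b‖ ^ q) * ‖b‖ := by
    rw [h1]
    refine (norm_add_le _ _).trans ?_
    rw [norm_smul, norm_smul, Real.norm_eq_abs, Real.norm_eq_abs,
      abs_of_nonneg hA, abs_of_nonneg (by linarith)]
  have h3 : (‖a‖ ^ q - ‖b‖ ^ q) * ‖b‖ ≤ q * ‖a‖ ^ q * (‖a‖ - ‖b‖) :=
    scalar_key hq (norm_nonneg b) hab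
  have h4 : ‖a‖ - ‖b‖ ≤ ‖a - b‖ := norm_sub_norm_le a b
  have h5 : ‖a‖ ^ q ≤ (‖a‖ + ‖b‖) ^ q :=
    Real.rpow_le_rpow (norm_nonneg a) (by linarith [norm_nonneg b]) hq
  have h6 : q * ‖a‖ ^ q * (‖a‖ - ‖b‖) ≤ q * ‖a‖ ^ q * ‖a - b‖ :=
    mul_le_mul_of_nonneg_left h4 (by positivity)
  have h7 : ‖a‖ ^ q * ‖a - b‖ + q * ‖a‖ ^ q * ‖a - b‖ = (1 + q) * ‖a‖ ^ q * ‖a - b‖ := by ring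
  have hr1q : 1 + q = r := by rw [hqdef]; ring
  calc ‖‖a‖ ^ q • a - ‖b‖ ^ q • b‖
      ≤ ‖a‖ ^ q * ‖a - b‖ + q * ‖a‖ ^ q * ‖a - b‖ := by linarith
    _ = r * ‖a‖ ^ q * ‖a - b‖ := by rw [h7, hr1q]
    _ ≤ r * (‖a‖ + ‖b‖) ^ q * ‖a - b‖ := by
        have hr0 : (0:ℝ) ≤ r := by linarith
        have := mul_le_mul_of_nonneg_left h5 hr0
        exact mul_le_mul_of_nonneg_right this (norm_nonneg _)

private lemma vector_key {E : Type*} [NormedAddCommGroup E] [NormedSpace ℝ E]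
    {r : ℝ} (hr : 1 ≤ r) (a b : E) :
    ‖‖a‖ ^ (r - 1) • a - ‖b‖ ^ (r - 1) • b‖ ≤ r * (‖a‖ + ‖b‖) ^ (r - 1) * ‖a - b‖ := by
  rcases le_total ‖b‖ ‖a‖ with h | h
  · exact vector_key_aux hr a b h
  · have := vector_key_aux hr b a h
    rw [norm_sub_rev, norm_sub_rev b a, add_comm ‖b‖] at this
    exact this

theorem forchheimer_Lp_local_lipschitz {X : Type*} [MeasurableSpace X] (m : Measure X)
    (n : ℕ) (hn : 1 ≤ n) (r : ℝ) (hr : 1 ≤ r) (f g : X → EuclideanSpace ℝ (Fin n))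
    (hf : MemLp f (ENNReal.ofReal (r + 1)) m) (hg : MemLp g (ENNReal.ofReal (r + 1)) m) :
    MemLp (fun x => ‖f x‖ ^ (r - 1) • f x - ‖g x‖ ^ (r - 1) • g x)
        (ENNReal.ofReal ((r + 1) / r)) m ∧
      eLpNorm (fun x => ‖f x‖ ^ (r - 1) • f x - ‖g x‖ ^ (r - 1) • g x)
          (ENNReal.ofReal ((r + 1) / r)) m ≤
        ENNReal.ofReal r *
            (eLpNorm f (ENNReal.ofReal (r + 1)) m + eLpNorm g (ENNReal.ofReal (r + 1)) m)
              ^ (r - 1) *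
          eLpNorm (f - g) (ENNReal.ofReal (r + 1)) m := by
  have hfm := hf.aestronglyMeasurable
  have hgm := hg.aestronglyMeasurable
  have hq : 0 ≤ r - 1 := by linarith
  rcases eq_or_lt_of_le hr with hr1 | hr1
  · -- r = 1
    subst hr1
    have hfun : (fun x => ‖f x‖ ^ ((1:ℝ) - 1) • f x - ‖g x‖ ^ ((1:ℝ) - 1) • g x)
        = fun x => f x - g x := by
      funext x; simp
    have h2 : ENNReal.ofReal (((1:ℝ) + 1) / 1) = ENNReal.ofReal ((1:ℝ) + 1) := by norm_num
    rw [hfun, h2]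
    refine ⟨hf.sub hg, ?_⟩
    simp only [sub_self, ENNReal.rpow_zero, ENNReal.ofReal_one, one_mul, mul_one]
    exact le_of_eq rfl
  · -- r > 1
    set p := ENNReal.ofReal (r + 1) with hpdef
    set P := ENNReal.ofReal ((r + 1) / r) with hPdef
    set Q := ENNReal.ofReal ((r + 1) / (r - 1)) with hQdef
    have hr0 : (0:ℝ) < r := by linarith
    have hr10 : (0:ℝ) < r - 1 := by linarith
    have hr2 : (0:ℝ) < r + 1 := by linarith
    -- exponent arithmetic
    have hpqr : 1 / P = 1 / Q + 1 / p := by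
      rw [hPdef, hQdef, hpdef, one_div, one_div, one_div,
        ← ENNReal.ofReal_inv_of_pos (by positivity),
        ← ENNReal.ofReal_inv_of_pos (by positivity),
        ← ENNReal.ofReal_inv_of_pos hr2,
        ← ENNReal.ofReal_add (by positivity) (by positivity)]
      congr 1
      field_simp
      ring
    -- measurability of the pieces
    have hCf : AEStronglyMeasurable (fun x => ‖f x‖ ^ (r - 1) • f x) m :=
      ((Real.continuous_rpow_const hq).comp_aestronglyMeasurable hfm.norm).smul hfm
    have hCg : AEStronglyMeasurable (fun x => ‖g x‖ ^ (r - 1) • g x) m :=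
      ((Real.continuous_rpow_const hq).comp_aestronglyMeasurable hgm.norm).smul hgm
    have hCm : AEStronglyMeasurable
        (fun x => ‖f x‖ ^ (r - 1) • f x - ‖g x‖ ^ (r - 1) • g x) m := hCf.sub hCg
    have hφm : AEStronglyMeasurable (fun x => r * (‖f x‖ + ‖g x‖) ^ (r - 1)) m :=
      (aestronglyMeasurable_const.mul
        ((Real.continuous_rpow_const hq).comp_aestronglyMeasurable (hfm.norm.add hgm.norm)))
    have hfgm : AEStronglyMeasurable (f - g) m := hfm.sub hgm
    -- step 1: pointwise bound
    have step1 : eLpNorm (fun x => ‖f x‖ ^ (r - 1) • f x - ‖g x‖ ^ (r - 1) • g x) P m ≤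
        eLpNorm ((fun x => r * (‖f x‖ + ‖g x‖) ^ (r - 1)) • (f - g)) P m := by
      refine eLpNorm_mono fun x => ?_
      have hk := vector_key hr (f x) (g x)
      have hc : (0:ℝ) ≤ r * (‖f x‖ + ‖g x‖) ^ (r - 1) :=
        mul_nonneg hr0.le (Real.rpow_nonneg (by positivity) _)
      have : ‖((fun x => r * (‖f x‖ + ‖g x‖) ^ (r - 1)) • (f - g)) x‖
          = (r * (‖f x‖ + ‖g x‖) ^ (r - 1)) * ‖f x - g x‖ := by
        rw [Pi.smul_apply', Pi.sub_apply, norm_smul, Real.norm_eq_abs, abs_of_nonneg hc]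
      rw [this]
      calc ‖‖f x‖ ^ (r - 1) • f x - ‖g x‖ ^ (r - 1) • g x‖
          ≤ r * (‖f x‖ + ‖g x‖) ^ (r - 1) * ‖f x - g x‖ := hk
        _ = r * (‖f x‖ + ‖g x‖) ^ (r - 1) * ‖f x - g x‖ := rfl
    -- step 2: Hölder
    have step2 : eLpNorm ((fun x => r * (‖f x‖ + ‖g x‖) ^ (r - 1)) • (f - g)) P m ≤
        eLpNorm (fun x => r * (‖f x‖ + ‖g x‖) ^ (r - 1)) Q m * eLpNorm (f - g) p m :=
      eLpNorm_smul_le_mul_eLpNorm hfgm hφm (hpqr := ⟨by simpa only [one_div] using hpqr.symm⟩)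
    -- step 3: the Q-norm of the coefficient
    have step3 : eLpNorm (fun x => r * (‖f x‖ + ‖g x‖) ^ (r - 1)) Q m ≤
        ENNReal.ofReal r * (eLpNorm f p m + eLpNorm g p m) ^ (r - 1) := by
      have hsmul : (fun x => r * (‖f x‖ + ‖g x‖) ^ (r - 1))
          = r • fun x => (‖f x‖ + ‖g x‖) ^ (r - 1) := by
        funext x; simp [smul_eq_mul]
      rw [hsmul, eLpNorm_const_smul]
      have hnr : (‖r‖ₑ : ℝ≥0∞) = ENNReal.ofReal r := by
        rw [Real.enorm_eq_ofReal hr0.le]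
      rw [hnr]
      refine mul_le_mul_right ?_ _
      have hnorm : (fun x => (‖f x‖ + ‖g x‖) ^ (r - 1))
          = fun x => ‖(fun y => ‖f y‖ + ‖g y‖) x‖ ^ (r - 1) := by
        funext x
        rw [Real.norm_eq_abs, abs_of_nonneg (by positivity)]
      rw [hnorm, eLpNorm_norm_rpow _ hr10]
      have hQp : Q * ENNReal.ofReal (r - 1) = p := by
        rw [hQdef, hpdef, ← ENNReal.ofReal_mul (by positivity)]
        congr 1
        field_simp
      rw [hQp]
      refine ENNReal.rpow_le_rpow ?_ hq
      have htri : eLpNorm (fun y => ‖f y‖ + ‖g y‖) p m ≤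
          eLpNorm (fun y => ‖f y‖) p m + eLpNorm (fun y => ‖g y‖) p m :=
        eLpNorm_add_le hfm.norm hgm.norm (by
          rw [hpdef]
          exact ENNReal.one_le_ofReal.mpr (by linarith))
      simpa [eLpNorm_norm] using htri
    -- combine
    have hbound : eLpNorm (fun x => ‖f x‖ ^ (r - 1) • f x - ‖g x‖ ^ (r - 1) • g x) P m ≤
        ENNReal.ofReal r * (eLpNorm f p m + eLpNorm g p m) ^ (r - 1) * eLpNorm (f - g) p m := by
      refine (step1.trans step2).trans ?_
      exact mul_le_mul_left step3 _
    refine ⟨⟨hCm, lt_of_le_of_lt hbound ?_⟩, hbound⟩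
    have h1 : ENNReal.ofReal r < ∞ := ENNReal.ofReal_lt_top
    have h2 : (eLpNorm f p m + eLpNorm g p m) ^ (r - 1) < ∞ :=
      ENNReal.rpow_lt_top_of_nonneg hq (by
        simp only [Ne, ENNReal.add_eq_top, not_or]
        exact ⟨hf.eLpNorm_lt_top.ne, hg.eLpNorm_lt_top.ne⟩)
    have h3 : eLpNorm (f - g) p m < ∞ := (hf.sub hg).eLpNorm_lt_top
    exact ENNReal.mul_lt_top (ENNReal.mul_lt_top h1 h2) h3
end

section
/- Let (X, m) be a measure space, n ≥ 1, let r > 3 be a real number and let β, μ > 0, and set η = ((r−3)/(2μ(r−1)))·(2/(βμ(r−1)))^{2/(r−3)}. Then for all u, v ∈ L²(m; ℝ^n) ∩ L^{r+1}(m; ℝ^n) one has ∫_X |v(x)|²|u(x) − v(x)|² dm(x) ≤ 2βμ ∫_X (|u(x)|^{r−1}u(x) − |v(x)|^{r−1}v(x)) · (u(x) − v(x)) dm(x) + 2μη ∫_X |u(x) − v(x)|² dm(x), all integrands being integrable under the stated hypotheses. -/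
open Real MeasureTheory

lemma youngA {r β μ : ℝ} (hr : 3 < r) (hβ : 0 < β) (hμ : 0 < μ) (t : ℝ) (ht : 0 ≤ t) :
    t ^ 2 ≤ β * μ * t ^ (r - 1) +
      (r - 3) / (r - 1) * (2 / (β * μ * (r - 1))) ^ (2 / (r - 3)) := by
  have hr1 : (0:ℝ) < r - 1 := by linarith
  have hr3 : (0:ℝ) < r - 3 := by linarith
  set θ : ℝ := 2 / (r - 1) with hθdef
  have hθpos : 0 < θ := by positivity
  have hθlt : θ < 1 := by rw [hθdef, div_lt_one hr1]; linarith
  set ε : ℝ := β * μ * (r - 1) / 2 with hεdef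
  have hεpos : 0 < ε := by positivity
  have key := Real.geom_mean_le_arith_mean2_weighted (le_of_lt hθpos)
    (by linarith : (0:ℝ) ≤ 1 - θ)
    (by positivity : (0:ℝ) ≤ ε * t ^ (r - 1))
    (by positivity : (0:ℝ) ≤ ε ^ (-(2 / (r - 3))))
    (by ring : θ + (1 - θ) = 1)
  have hA : (r - 1) * θ = 2 := by rw [hθdef]; field_simp
  have hB : θ + -(2 / (r - 3)) * (1 - θ) = 0 := by
    rw [hθdef]; field_simp; ring
  have hL : (ε * t ^ (r - 1)) ^ θ * (ε ^ (-(2 / (r - 3)))) ^ (1 - θ) = t ^ 2 := by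
    rw [Real.mul_rpow hεpos.le (by positivity), ← Real.rpow_natCast t 2,
      ← Real.rpow_mul ht, ← Real.rpow_mul hεpos.le, hA]
    push_cast
    calc ε ^ θ * t ^ (2:ℝ) * ε ^ (-(2 / (r - 3)) * (1 - θ))
        = t ^ (2:ℝ) * ε ^ (θ + -(2 / (r - 3)) * (1 - θ)) := by
          rw [Real.rpow_add hεpos]; ring
      _ = t ^ (2:ℝ) := by rw [hB, Real.rpow_zero, mul_one]
  have hR1 : θ * (ε * t ^ (r - 1)) = β * μ * t ^ (r - 1) := by
    rw [hθdef, hεdef]; field_simp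
  have hR2 : (1 - θ) * ε ^ (-(2 / (r - 3)))
      = (r - 3) / (r - 1) * (2 / (β * μ * (r - 1))) ^ (2 / (r - 3)) := by
    have h1 : (1:ℝ) - θ = (r - 3) / (r - 1) := by
      rw [hθdef]; field_simp; ring
    have h2 : ε ^ (-(2 / (r - 3))) = (2 / (β * μ * (r - 1))) ^ (2 / (r - 3)) := by
      rw [Real.rpow_neg hεpos.le, ← Real.inv_rpow hεpos.le]
      congr 1
      rw [hεdef]
      field_simp
    rw [h1, h2]
  rw [hL, hR1, hR2] at key
  exact key

lemma monoB {E : Type*} [NormedAddCommGroup E] [InnerProductSpace ℝ E]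
    {q : ℝ} (hq : 0 ≤ q) (a b : E) :
    1 / 2 * (‖a‖ ^ q + ‖b‖ ^ q) * ‖a - b‖ ^ 2 ≤
      (inner ℝ (‖a‖ ^ q • a - ‖b‖ ^ q • b) (a - b) : ℝ) := by
  have hsign : 0 ≤ (‖a‖ ^ q - ‖b‖ ^ q) * (‖a‖ ^ 2 - ‖b‖ ^ 2) := by
    rcases le_total ‖a‖ ‖b‖ with h | h
    · exact mul_nonneg_of_nonpos_of_nonpos
        (sub_nonpos.2 (Real.rpow_le_rpow (norm_nonneg a) h hq))
        (sub_nonpos.2 (pow_le_pow_left₀ (norm_nonneg a) h 2))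
    · exact mul_nonneg
        (sub_nonneg.2 (Real.rpow_le_rpow (norm_nonneg b) h hq))
        (sub_nonneg.2 (pow_le_pow_left₀ (norm_nonneg b) h 2))
  have hexp : (inner ℝ (‖a‖ ^ q • a - ‖b‖ ^ q • b) (a - b) : ℝ)
      = ‖a‖ ^ q * ‖a‖ ^ 2 + ‖b‖ ^ q * ‖b‖ ^ 2
        - (‖a‖ ^ q + ‖b‖ ^ q) * (inner ℝ a b : ℝ) := by
    simp only [inner_sub_left, inner_sub_right, real_inner_smul_left,
      real_inner_self_eq_norm_sq, real_inner_comm b a]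
    ring
  rw [hexp, norm_sub_sq_real]
  nlinarith [hsign]

theorem monotonicity_quantitative {X : Type*} [MeasurableSpace X] (m : Measure X)
    (n : ℕ) (hn : 1 ≤ n) (r β μ η : ℝ) (hr : 3 < r) (hβ : 0 < β) (hμ : 0 < μ)
    (hη : η = (r - 3) / (2 * μ * (r - 1)) * (2 / (β * μ * (r - 1))) ^ (2 / (r - 3)))
    (u v : X → EuclideanSpace ℝ (Fin n))
    (hu2 : MemLp u 2 m) (hur : MemLp u (ENNReal.ofReal (r + 1)) m)
    (hv2 : MemLp v 2 m) (hvr : MemLp v (ENNReal.ofReal (r + 1)) m) :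
    (∫ x, ‖v x‖ ^ 2 * ‖u x - v x‖ ^ 2 ∂m) ≤
      2 * β * μ *
          (∫ x, (inner ℝ (‖u x‖ ^ (r - 1) • u x - ‖v x‖ ^ (r - 1) • v x) (u x - v x) : ℝ) ∂m) +
        2 * μ * η * (∫ x, ‖u x - v x‖ ^ 2 ∂m) := by
  have hr1 : (0:ℝ) < r - 1 := by linarith
  set g : X → ℝ :=
    fun x => (inner ℝ (‖u x‖ ^ (r - 1) • u x - ‖v x‖ ^ (r - 1) • v x) (u x - v x) : ℝ) with hgdef
  set q : X → ℝ := fun x => ‖u x - v x‖ ^ 2 with hqdef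
  set w : X → ℝ := fun x => ‖u x‖ + ‖v x‖ with hwdef
  -- value of 2 μ η
  have h2μη : 2 * μ * η = (r - 3) / (r - 1) * (2 / (β * μ * (r - 1))) ^ (2 / (r - 3)) := by
    rw [hη]; field_simp
  -- pointwise inequality
  have hpt : ∀ x, ‖v x‖ ^ 2 * ‖u x - v x‖ ^ 2 ≤ 2 * β * μ * g x + 2 * μ * η * q x := by
    intro x
    have hy := youngA hr hβ hμ ‖v x‖ (norm_nonneg _)
    have hm := monoB (E := EuclideanSpace ℝ (Fin n)) (q := r - 1) (by linarith) (u x) (v x)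
    have hs : (0:ℝ) ≤ ‖u x - v x‖ ^ 2 := by positivity
    have hu0 : (0:ℝ) ≤ ‖u x‖ ^ (r - 1) := by positivity
    have hbm : (0:ℝ) < β * μ := by positivity
    rw [h2μη]
    have key1 := mul_le_mul_of_nonneg_right hy hs
    have key2 := mul_le_mul_of_nonneg_left hm (by positivity : (0:ℝ) ≤ 2 * β * μ)
    simp only [hgdef, hqdef]
    nlinarith [mul_nonneg (mul_nonneg hbm.le hu0) hs]
  -- measurability
  have hum := hu2.aestronglyMeasurable
  have hvm := hv2.aestronglyMeasurable
  have hnu : AEStronglyMeasurable (fun x => ‖u x‖ ^ (r - 1)) m :=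
    (Real.continuous_rpow_const (by linarith)).comp_aestronglyMeasurable hum.norm
  have hnv : AEStronglyMeasurable (fun x => ‖v x‖ ^ (r - 1)) m :=
    (Real.continuous_rpow_const (by linarith)).comp_aestronglyMeasurable hvm.norm
  have hgm : AEStronglyMeasurable g m :=
    AEStronglyMeasurable.inner ((hnu.smul hum).sub (hnv.smul hvm)) (hum.sub hvm)
  -- integrability of q
  have hIq : Integrable q m := by
    have h2 := (hu2.sub hv2).integrable_norm_rpow two_ne_zero ENNReal.ofNat_ne_top
    refine h2.congr (Filter.Eventually.of_forall fun x => ?_)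
    show ‖u x - v x‖ ^ (ENNReal.toReal 2) = q x
    rw [show (ENNReal.toReal 2) = ((2:ℕ):ℝ) by norm_num, Real.rpow_natCast, hqdef]
  -- integrability of w^(r+1)
  have hw0 : ∀ x, 0 ≤ w x := fun x => by positivity
  have hwmem : MemLp w (ENNReal.ofReal (r + 1)) m := hur.norm.add hvr.norm
  have hIw : Integrable (fun x => w x ^ (r + 1)) m := by
    have h0 : ENNReal.ofReal (r + 1) ≠ 0 := by
      simp only [ne_eq, ENNReal.ofReal_eq_zero, not_le]; linarith
    have h2 := hwmem.integrable_norm_rpow h0 ENNReal.ofReal_ne_top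
    refine h2.congr (Filter.Eventually.of_forall fun x => ?_)
    show ‖w x‖ ^ (ENNReal.ofReal (r + 1)).toReal = w x ^ (r + 1)
    rw [ENNReal.toReal_ofReal (by linarith : (0:ℝ) ≤ r + 1),
      Real.norm_eq_abs, abs_of_nonneg (hw0 x)]
  -- integrability of g
  have hIg : Integrable g m := by
    refine Integrable.mono' (hIw.const_mul 2) hgm
      (Filter.Eventually.of_forall fun x => ?_)
    have h1 : ‖g x‖ ≤ ‖‖u x‖ ^ (r - 1) • u x - ‖v x‖ ^ (r - 1) • v x‖ * ‖u x - v x‖ := by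
      rw [hgdef, Real.norm_eq_abs]
      exact abs_real_inner_le_norm _ _
    have hA : ‖‖u x‖ ^ (r - 1) • u x - ‖v x‖ ^ (r - 1) • v x‖ ≤ 2 * w x ^ r := by
      have h2 : ‖‖u x‖ ^ (r - 1) • u x - ‖v x‖ ^ (r - 1) • v x‖
          ≤ ‖u x‖ ^ (r - 1) * ‖u x‖ + ‖v x‖ ^ (r - 1) * ‖v x‖ := by
        refine (norm_sub_le _ _).trans ?_
        rw [norm_smul, norm_smul, Real.norm_eq_abs, Real.norm_eq_abs,
          abs_of_nonneg (by positivity : (0:ℝ) ≤ ‖u x‖ ^ (r - 1)),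
          abs_of_nonneg (by positivity : (0:ℝ) ≤ ‖v x‖ ^ (r - 1))]
      have hwr : w x ^ (r - 1) * w x = w x ^ r := by
        have h5 := Real.rpow_add' (hw0 x) (show (r - 1) + 1 ≠ 0 by intro hc; linarith)
        rw [Real.rpow_one, show (r - 1) + 1 = r from by ring] at h5
        exact h5.symm
      have hule : ‖u x‖ ≤ w x := by rw [hwdef]; simp [norm_nonneg]
      have hvle : ‖v x‖ ≤ w x := by rw [hwdef]; simp [norm_nonneg]
      have h3 : ‖u x‖ ^ (r - 1) * ‖u x‖ ≤ w x ^ (r - 1) * w x :=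
        mul_le_mul (Real.rpow_le_rpow (norm_nonneg _) hule (by linarith)) hule
          (norm_nonneg _) (by positivity)
      have h4 : ‖v x‖ ^ (r - 1) * ‖v x‖ ≤ w x ^ (r - 1) * w x :=
        mul_le_mul (Real.rpow_le_rpow (norm_nonneg _) hvle (by linarith)) hvle
          (norm_nonneg _) (by positivity)
      rw [hwr] at h3 h4
      linarith
    have hB : ‖u x - v x‖ ≤ w x := by
      rw [hwdef]; exact norm_sub_le _ _
    have hwr1 : w x ^ r * w x = w x ^ (r + 1) := by
      have h5 := Real.rpow_add' (hw0 x) (show r + 1 ≠ 0 by intro hc; linarith)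
      rw [Real.rpow_one] at h5
      exact h5.symm
    calc ‖g x‖ ≤ (2 * w x ^ r) * w x :=
          h1.trans (mul_le_mul hA hB (norm_nonneg _) (by positivity))
      _ = 2 * w x ^ (r + 1) := by rw [mul_assoc, hwr1]
  -- conclude
  have hG : Integrable (fun x => 2 * β * μ * g x + 2 * μ * η * q x) m :=
    (hIg.const_mul _).add (hIq.const_mul _)
  have hmain : (∫ x, ‖v x‖ ^ 2 * ‖u x - v x‖ ^ 2 ∂m)
      ≤ ∫ x, (2 * β * μ * g x + 2 * μ * η * q x) ∂m := by
    refine integral_mono_of_nonneg (Filter.Eventually.of_forall fun x => by positivity) hG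
      (Filter.Eventually.of_forall hpt)
  rw [integral_add (hIg.const_mul _) (hIq.const_mul _), integral_const_mul,
    integral_const_mul] at hmain
  exact hmain
end

section
/- Let (X, m) be a measure space, n ≥ 1, and let r ≥ 1 be a real number. Then for all u, v ∈ L^{r+1}(m; ℝ^n), the functions x ↦ (|u(x)|^{r−1}u(x) − |v(x)|^{r−1}v(x)) · (u(x) − v(x)) and x ↦ (|u(x)|^{r−1} + |v(x)|^{r−1})|u(x) − v(x)|² are integrable and ∫_X (|u(x)|^{r−1}u(x) − |v(x)|^{r−1}v(x)) · (u(x) − v(x)) dm(x) ≥ (1/2) ∫_X |u(x)|^{r−1}|u(x) − v(x)|² dm(x) + (1/2) ∫_X |v(x)|^{r−1}|u(x) − v(x)|² dm(x) ≥ 0. -/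
open Real MeasureTheory

private lemma aux_rpow_mul_le {a b s t : ℝ} (ha : 0 ≤ a) (hb : 0 ≤ b) (hs : 0 ≤ s)
    (ht : 0 ≤ t) : a ^ s * b ^ t ≤ a ^ (s + t) + b ^ (s + t) := by
  rcases le_total a b with h | h
  · have h1 : a ^ s ≤ b ^ s := Real.rpow_le_rpow ha h hs
    calc a ^ s * b ^ t ≤ b ^ s * b ^ t :=
          mul_le_mul_of_nonneg_right h1 (Real.rpow_nonneg hb t)
      _ = b ^ (s + t) := (Real.rpow_add_of_nonneg hb hs ht).symm
      _ ≤ a ^ (s + t) + b ^ (s + t) := le_add_of_nonneg_left (Real.rpow_nonneg ha _)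
  · have h1 : b ^ t ≤ a ^ t := Real.rpow_le_rpow hb h ht
    calc a ^ s * b ^ t ≤ a ^ s * a ^ t :=
          mul_le_mul_of_nonneg_left h1 (Real.rpow_nonneg ha s)
      _ = a ^ (s + t) := (Real.rpow_add_of_nonneg ha hs ht).symm
      _ ≤ a ^ (s + t) + b ^ (s + t) := le_add_of_nonneg_right (Real.rpow_nonneg hb _)

private lemma aux_sq_rpow {a : ℝ} : a ^ (2 : ℕ) = a ^ (2 : ℝ) := by
  rw [← Real.rpow_natCast a 2]; norm_num

private lemma aux_rpow_mul_self {a s : ℝ} (ha : 0 ≤ a) (hs : 0 ≤ s) :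
    a ^ s * a = a ^ (s + 1) := by
  nth_rewrite 2 [← Real.rpow_one a]
  rw [← Real.rpow_add_of_nonneg ha hs zero_le_one]

private lemma aux_rpow_mul_sq {a s : ℝ} (ha : 0 ≤ a) (hs : 0 ≤ s) :
    a ^ s * a ^ (2 : ℕ) = a ^ (s + 2) := by
  rw [aux_sq_rpow, ← Real.rpow_add_of_nonneg ha hs (by norm_num)]

private lemma key_pointwise {E : Type*} [NormedAddCommGroup E] [InnerProductSpace ℝ E]
    (r : ℝ) (hr : 1 ≤ r) (a b : E) :
    (1 / 2 : ℝ) * ((‖a‖ ^ (r - 1) + ‖b‖ ^ (r - 1)) * ‖a - b‖ ^ 2) ≤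
      (inner ℝ (‖a‖ ^ (r - 1) • a - ‖b‖ ^ (r - 1) • b) (a - b) : ℝ) := by
  set α := ‖a‖ ^ (r - 1) with hα
  set β := ‖b‖ ^ (r - 1) with hβ
  have hsq : ‖a - b‖ ^ 2 = ‖a‖ ^ 2 - 2 * inner ℝ a b + ‖b‖ ^ 2 := @norm_sub_sq_real E _ _ a b
  have hexp : (inner ℝ (α • a - β • b) (a - b) : ℝ) =
      α * ‖a‖ ^ 2 - α * inner ℝ a b - β * inner ℝ a b + β * ‖b‖ ^ 2 := by
    rw [inner_sub_left, inner_sub_right, inner_sub_right, real_inner_smul_left,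
      real_inner_smul_left, real_inner_smul_left, real_inner_smul_left,
      real_inner_self_eq_norm_sq, real_inner_self_eq_norm_sq, real_inner_comm b a]
    ring
  have hkey : 0 ≤ (α - β) * (‖a‖ ^ 2 - ‖b‖ ^ 2) := by
    rcases le_total ‖a‖ ‖b‖ with h | h
    · have h1 : α ≤ β := Real.rpow_le_rpow (norm_nonneg a) h (by linarith)
      have h2 : ‖a‖ ^ 2 ≤ ‖b‖ ^ 2 := by
        have := norm_nonneg a; nlinarith
      nlinarith
    · have h1 : β ≤ α := Real.rpow_le_rpow (norm_nonneg b) h (by linarith)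
      have h2 : ‖b‖ ^ 2 ≤ ‖a‖ ^ 2 := by
        have := norm_nonneg b; nlinarith
      nlinarith
  rw [hexp, hsq]
  nlinarith [hkey]

theorem forchheimer_integral_monotonicity {X : Type*} [MeasurableSpace X] (m : Measure X)
    (n : ℕ) (hn : 1 ≤ n) (r : ℝ) (hr : 1 ≤ r) (u v : X → EuclideanSpace ℝ (Fin n))
    (hu : MemLp u (ENNReal.ofReal (r + 1)) m) (hv : MemLp v (ENNReal.ofReal (r + 1)) m) :
    Integrable
        (fun x => (inner ℝ (‖u x‖ ^ (r - 1) • u x - ‖v x‖ ^ (r - 1) • v x) (u x - v x) : ℝ)) m ∧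
      Integrable (fun x => (‖u x‖ ^ (r - 1) + ‖v x‖ ^ (r - 1)) * ‖u x - v x‖ ^ 2) m ∧
      (1 / 2) * (∫ x, ‖u x‖ ^ (r - 1) * ‖u x - v x‖ ^ 2 ∂m) +
          (1 / 2) * (∫ x, ‖v x‖ ^ (r - 1) * ‖u x - v x‖ ^ 2 ∂m) ≤
        (∫ x, (inner ℝ (‖u x‖ ^ (r - 1) • u x - ‖v x‖ ^ (r - 1) • v x) (u x - v x) : ℝ) ∂m) ∧
      0 ≤ (1 / 2) * (∫ x, ‖u x‖ ^ (r - 1) * ‖u x - v x‖ ^ 2 ∂m) +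
          (1 / 2) * (∫ x, ‖v x‖ ^ (r - 1) * ‖u x - v x‖ ^ 2 ∂m) := by
  have hr1 : (0:ℝ) ≤ r - 1 := by linarith
  have hne0 : ENNReal.ofReal (r + 1) ≠ 0 := by
    simp [ENNReal.ofReal_eq_zero]; linarith
  have hneT : ENNReal.ofReal (r + 1) ≠ ⊤ := ENNReal.ofReal_ne_top
  have htoReal : (ENNReal.ofReal (r + 1)).toReal = r + 1 :=
    ENNReal.toReal_ofReal (by linarith)
  have hgu : Integrable (fun x => ‖u x‖ ^ (r + 1)) m := by
    have := hu.integrable_norm_rpow hne0 hneT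
    rwa [htoReal] at this
  have hgv : Integrable (fun x => ‖v x‖ ^ (r + 1)) m := by
    have := hv.integrable_norm_rpow hne0 hneT
    rwa [htoReal] at this
  have hg : Integrable (fun x => 6 * (‖u x‖ ^ (r + 1) + ‖v x‖ ^ (r + 1))) m :=
    ((hgu.add hgv).const_mul 6)
  have hum : AEStronglyMeasurable u m := hu.aestronglyMeasurable
  have hvm : AEStronglyMeasurable v m := hv.aestronglyMeasurable
  have hαm : AEStronglyMeasurable (fun x => ‖u x‖ ^ (r - 1)) m :=
    (Real.continuous_rpow_const hr1).comp_aestronglyMeasurable hum.norm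
  have hβm : AEStronglyMeasurable (fun x => ‖v x‖ ^ (r - 1)) m :=
    (Real.continuous_rpow_const hr1).comp_aestronglyMeasurable hvm.norm
  have hdm : AEStronglyMeasurable (fun x => u x - v x) m := hum.sub hvm
  have hdsqm : AEStronglyMeasurable (fun x => ‖u x - v x‖ ^ 2) m :=
    (hdm.norm.aemeasurable.pow_const 2).aestronglyMeasurable
  -- generic pointwise bound
  have key_bound : ∀ (a b d : ℝ), 0 ≤ a → 0 ≤ b → 0 ≤ d → d ≤ a + b →
      a ^ (r - 1) * d ^ 2 ≤ 6 * (a ^ (r + 1) + b ^ (r + 1)) := by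
    intro a b d ha hb hd0 hd
    have hα : 0 ≤ a ^ (r - 1) := Real.rpow_nonneg ha _
    have hd2 : d ^ 2 ≤ 2 * a ^ 2 + 2 * b ^ 2 := by
      nlinarith [mul_le_mul hd hd hd0 (by linarith), sq_nonneg (a - b)]
    have h1 : a ^ (r - 1) * a ^ 2 = a ^ (r + 1) := by
      rw [aux_rpow_mul_sq ha hr1]; ring_nf
    have h2 : a ^ (r - 1) * b ^ 2 ≤ a ^ (r + 1) + b ^ (r + 1) := by
      have h := aux_rpow_mul_le ha hb hr1 (t := 2) (by norm_num)
      rw [show r - 1 + 2 = r + 1 by ring] at h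
      rw [aux_sq_rpow]
      exact h
    have hnn1 := Real.rpow_nonneg ha (r + 1)
    have hnn2 := Real.rpow_nonneg hb (r + 1)
    calc a ^ (r - 1) * d ^ 2 ≤ a ^ (r - 1) * (2 * a ^ 2 + 2 * b ^ 2) :=
          mul_le_mul_of_nonneg_left hd2 hα
      _ = 2 * (a ^ (r - 1) * a ^ 2) + 2 * (a ^ (r - 1) * b ^ 2) := by ring
      _ ≤ 2 * a ^ (r + 1) + 2 * (a ^ (r + 1) + b ^ (r + 1)) := by rw [h1]; linarith
      _ ≤ 6 * (a ^ (r + 1) + b ^ (r + 1)) := by linarith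
  have hbound1 : ∀ x, ‖u x‖ ^ (r - 1) * ‖u x - v x‖ ^ 2 ≤
      6 * (‖u x‖ ^ (r + 1) + ‖v x‖ ^ (r + 1)) := fun x =>
    key_bound _ _ _ (norm_nonneg _) (norm_nonneg _) (norm_nonneg _) (norm_sub_le _ _)
  have hbound2 : ∀ x, ‖v x‖ ^ (r - 1) * ‖u x - v x‖ ^ 2 ≤
      6 * (‖u x‖ ^ (r + 1) + ‖v x‖ ^ (r + 1)) := by
    intro x
    have := key_bound (‖v x‖) (‖u x‖) (‖u x - v x‖) (norm_nonneg _) (norm_nonneg _)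
      (norm_nonneg _) (by rw [norm_sub_rev]; exact norm_sub_le _ _)
    linarith
  have hI1 : Integrable (fun x => ‖u x‖ ^ (r - 1) * ‖u x - v x‖ ^ 2) m := by
    refine hg.mono' (hαm.mul hdsqm) (Filter.Eventually.of_forall fun x => ?_)
    rw [Real.norm_eq_abs, abs_of_nonneg (mul_nonneg (Real.rpow_nonneg (norm_nonneg _) _)
      (sq_nonneg _))]
    exact hbound1 x
  have hI2 : Integrable (fun x => ‖v x‖ ^ (r - 1) * ‖u x - v x‖ ^ 2) m := by
    refine hg.mono' (hβm.mul hdsqm) (Filter.Eventually.of_forall fun x => ?_)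
    rw [Real.norm_eq_abs, abs_of_nonneg (mul_nonneg (Real.rpow_nonneg (norm_nonneg _) _)
      (sq_nonneg _))]
    exact hbound2 x
  have hIsum : Integrable (fun x => (‖u x‖ ^ (r - 1) + ‖v x‖ ^ (r - 1)) * ‖u x - v x‖ ^ 2) m := by
    refine (hI1.add hI2).congr (Filter.Eventually.of_forall fun x => ?_)
    simp only [Pi.add_apply]
    ring
  have hinner_m : AEStronglyMeasurable
      (fun x => (inner ℝ (‖u x‖ ^ (r - 1) • u x - ‖v x‖ ^ (r - 1) • v x) (u x - v x) : ℝ)) m :=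
    ((hαm.smul hum).sub (hβm.smul hvm)).inner hdm
  have hinner_bound : ∀ x,
      ‖(inner ℝ (‖u x‖ ^ (r - 1) • u x - ‖v x‖ ^ (r - 1) • v x) (u x - v x) : ℝ)‖ ≤
        6 * (‖u x‖ ^ (r + 1) + ‖v x‖ ^ (r + 1)) := by
    intro x
    set a := ‖u x‖ with ha'
    set b := ‖v x‖ with hb'
    have ha : 0 ≤ a := norm_nonneg _
    have hb : 0 ≤ b := norm_nonneg _
    have h1 : ‖(inner ℝ (‖u x‖ ^ (r - 1) • u x - ‖v x‖ ^ (r - 1) • v x) (u x - v x) : ℝ)‖ ≤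
        ‖‖u x‖ ^ (r - 1) • u x - ‖v x‖ ^ (r - 1) • v x‖ * ‖u x - v x‖ := norm_inner_le_norm _ _
    have h2 : ‖‖u x‖ ^ (r - 1) • u x - ‖v x‖ ^ (r - 1) • v x‖ ≤ a ^ r + b ^ r := by
      have hle := norm_sub_le (‖u x‖ ^ (r - 1) • u x) (‖v x‖ ^ (r - 1) • v x)
      rw [norm_smul, norm_smul, Real.norm_eq_abs, Real.norm_eq_abs,
        abs_of_nonneg (Real.rpow_nonneg ha _), abs_of_nonneg (Real.rpow_nonneg hb _)] at hle
      have ea : a ^ (r - 1) * a = a ^ r := by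
        rw [aux_rpow_mul_self ha hr1]; ring_nf
      have eb : b ^ (r - 1) * b = b ^ r := by
        rw [aux_rpow_mul_self hb hr1]; ring_nf
      rw [← ha', ← hb', ea, eb] at hle
      exact hle
    have h3 : ‖u x - v x‖ ≤ a + b := norm_sub_le _ _
    have h4 : (a ^ r + b ^ r) * (a + b) ≤ 6 * (a ^ (r + 1) + b ^ (r + 1)) := by
      have e1 : a ^ r * a = a ^ (r + 1) := aux_rpow_mul_self ha (by linarith)
      have e2 : b ^ r * b = b ^ (r + 1) := aux_rpow_mul_self hb (by linarith)
      have e3 : a ^ r * b ≤ a ^ (r + 1) + b ^ (r + 1) := by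
        have h := aux_rpow_mul_le ha hb (s := r) (t := 1) (by linarith) zero_le_one
        rwa [Real.rpow_one] at h
      have e4 : b ^ r * a ≤ b ^ (r + 1) + a ^ (r + 1) := by
        have h := aux_rpow_mul_le hb ha (s := r) (t := 1) (by linarith) zero_le_one
        rwa [Real.rpow_one] at h
      have hnn1 := Real.rpow_nonneg ha (r + 1)
      have hnn2 := Real.rpow_nonneg hb (r + 1)
      nlinarith [e1, e2, e3, e4]
    calc ‖(inner ℝ (‖u x‖ ^ (r - 1) • u x - ‖v x‖ ^ (r - 1) • v x) (u x - v x) : ℝ)‖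
        ≤ ‖‖u x‖ ^ (r - 1) • u x - ‖v x‖ ^ (r - 1) • v x‖ * ‖u x - v x‖ := h1
      _ ≤ (a ^ r + b ^ r) * (a + b) := by
          apply mul_le_mul h2 h3 (norm_nonneg _)
          positivity
      _ ≤ 6 * (a ^ (r + 1) + b ^ (r + 1)) := h4
  have hIinner : Integrable
      (fun x => (inner ℝ (‖u x‖ ^ (r - 1) • u x - ‖v x‖ ^ (r - 1) • v x) (u x - v x) : ℝ)) m :=
    hg.mono' hinner_m (Filter.Eventually.of_forall hinner_bound)
  refine ⟨hIinner, hIsum, ?_, ?_⟩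
  · have hmono : ∀ x, (1/2) * (‖u x‖ ^ (r - 1) * ‖u x - v x‖ ^ 2)
        + (1/2) * (‖v x‖ ^ (r - 1) * ‖u x - v x‖ ^ 2) ≤
        (inner ℝ (‖u x‖ ^ (r - 1) • u x - ‖v x‖ ^ (r - 1) • v x) (u x - v x) : ℝ) := by
      intro x
      have := key_pointwise r hr (u x) (v x)
      linarith
    calc (1 / 2) * (∫ x, ‖u x‖ ^ (r - 1) * ‖u x - v x‖ ^ 2 ∂m) +
          (1 / 2) * (∫ x, ‖v x‖ ^ (r - 1) * ‖u x - v x‖ ^ 2 ∂m)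
        = ∫ x, ((1/2) * (‖u x‖ ^ (r - 1) * ‖u x - v x‖ ^ 2)
            + (1/2) * (‖v x‖ ^ (r - 1) * ‖u x - v x‖ ^ 2)) ∂m := by
          rw [integral_add (hI1.const_mul _) (hI2.const_mul _),
            integral_const_mul, integral_const_mul]
      _ ≤ ∫ x, (inner ℝ (‖u x‖ ^ (r - 1) • u x - ‖v x‖ ^ (r - 1) • v x) (u x - v x) : ℝ) ∂m :=
          integral_mono ((hI1.const_mul _).add (hI2.const_mul _)) hIinner hmono
  · have h1 : 0 ≤ ∫ x, ‖u x‖ ^ (r - 1) * ‖u x - v x‖ ^ 2 ∂m :=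
      integral_nonneg fun x => mul_nonneg (Real.rpow_nonneg (norm_nonneg _) _) (sq_nonneg _)
    have h2 : 0 ≤ ∫ x, ‖v x‖ ^ (r - 1) * ‖u x - v x‖ ^ 2 ∂m :=
      integral_nonneg fun x => mul_nonneg (Real.rpow_nonneg (norm_nonneg _) _) (sq_nonneg _)
    linarith
end
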